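/- Let d ≡ 1 (mod 4) be a positive non-square integer, let ω_d = (1+√d)/2 = [a_0; a_1, a_2, …] be its simple continued fraction expansion with minimal period l′ and convergents p_n/q_n. Then for every n ≥ 0, |p_n² − p_n·q_n − q_n²·(d−1)/4| = 1 if and only if n + 1 is a multiple of l′. -/

import Mathlib

/-- The `n`-th total quotient `α_n` of the continued fraction expansion of `θ`:
`α_0 = θ`, `α_{n+1} = 1/(α_n - ⌊α_n⌋)`. -/
noncomputable def cfAlpha (θ : ℝ) : ℕ → ℝ
  | 0 => θ
  | n + 1 => 1 / Int.fract (cfAlpha θ n)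

/-- The `n`-th partial quotient `a_n` of the continued fraction expansion of `θ`. -/
noncomputable def cfA (θ : ℝ) (n : ℕ) : ℤ := ⌊cfAlpha θ n⌋

/-- Numerators of the convergents of `θ`, shifted by two:
`cfP θ (n+2) = p_n`, with `p_{-2} = 0`, `p_{-1} = 1`, `p_n = a_n p_{n-1} + p_{n-2}`. -/
noncomputable def cfP (θ : ℝ) : ℕ → ℤ
  | 0 => 0
  | 1 => 1
  | n + 2 => cfA θ n * cfP θ (n + 1) + cfP θ n

/-- Denominators of the convergents of `θ`, shifted by two:
`cfQ θ (n+2) = q_n`, with `q_{-2} = 1`, `q_{-1} = 0`, `q_n = a_n q_{n-1} + q_{n-2}`. -/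
noncomputable def cfQ (θ : ℝ) : ℕ → ℤ
  | 0 => 1
  | 1 => 0
  | n + 2 => cfA θ n * cfQ θ (n + 1) + cfQ θ n

/-- Companion sequence: run the recurrence `x ↦ 1/(x - a_n)` (with the partial quotients
of `θ`) starting from an arbitrary value `θc` (e.g. the algebraic conjugate of `θ`). -/
noncomputable def cfAC (θ θc : ℝ) : ℕ → ℝ
  | 0 => θc
  | n + 1 => 1 / (cfAC θ θc n - cfA θ n)

/-- `p_{n-1} - q_{n-1}·θc`. -/
noncomputable def cfB (θ θc : ℝ) (n : ℕ) : ℝ := cfP θ (n + 1) - cfQ θ (n + 1) * θc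

lemma cfAlpha_zero (θ : ℝ) : cfAlpha θ 0 = θ := rfl

lemma cfAlpha_succ (θ : ℝ) (n : ℕ) : cfAlpha θ (n + 1) = 1 / Int.fract (cfAlpha θ n) := rfl

lemma cfAC_self (θ : ℝ) : ∀ n, cfAC θ θ n = cfAlpha θ n := by
  intro n
  induction n with
  | zero => rfl
  | succ n ih =>
      rw [cfAC, cfAlpha_succ, ih, cfA, Int.self_sub_floor]

lemma cfAlpha_irrational {θ : ℝ} (h : Irrational θ) : ∀ n, Irrational (cfAlpha θ n) := by
  intro n
  induction n with
  | zero => exact h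
  | succ n ih =>
      rw [cfAlpha_succ, one_div, ← Int.self_sub_floor]
      exact (ih.sub_intCast _).inv

lemma cfAlpha_gt_one {θ : ℝ} (h : Irrational θ) (h1 : 1 < θ) : ∀ n, 1 < cfAlpha θ n := by
  intro n
  induction n with
  | zero => exact h1
  | succ n ih =>
      rw [cfAlpha_succ]
      have hirr : Irrational (Int.fract (cfAlpha θ n)) := by
        rw [← Int.self_sub_floor]; exact (cfAlpha_irrational h n).sub_intCast _
      have h0 : 0 < Int.fract (cfAlpha θ n) :=
        lt_of_le_of_ne (Int.fract_nonneg _) (fun hc => hirr.ne_int 0 (by simp [← hc]))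
      have hlt : Int.fract (cfAlpha θ n) < 1 := Int.fract_lt_one _
      rw [lt_div_iff₀ h0]; linarith

lemma cfA_one_le {θ : ℝ} (h : Irrational θ) (h1 : 1 < θ) (n : ℕ) : 1 ≤ cfA θ n := by
  have := cfAlpha_gt_one h h1 n
  exact Int.le_floor.mpr (by exact_mod_cast this.le)

lemma cfAlpha_shift (θ : ℝ) (k : ℕ) : ∀ m, cfAlpha θ (m + k) = cfAlpha (cfAlpha θ k) m := by
  intro m
  induction m with
  | zero => simp [cfAlpha_zero]
  | succ m ih =>
      have : m + 1 + k = (m + k) + 1 := by omega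
      rw [this, cfAlpha_succ, ih, ← cfAlpha_succ]

lemma cfA_shift (θ : ℝ) (k m : ℕ) : cfA θ (m + k) = cfA (cfAlpha θ k) m := by
  rw [cfA, cfA, cfAlpha_shift]

section generic

variable {θ θc : ℝ} (hne : ∀ n, cfAC θ θc n ≠ (cfA θ n : ℝ))

include hne

lemma cfAC_succ_ne_zero (n : ℕ) : cfAC θ θc (n + 1) ≠ 0 := by
  rw [cfAC]
  exact one_div_ne_zero (sub_ne_zero.mpr (hne n))

lemma cfAC_rec (n : ℕ) : cfAC θ θc n = (cfA θ n : ℝ) + 1 / cfAC θ θc (n + 1) := by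
  have h := sub_ne_zero.mpr (hne n)
  rw [cfAC, one_div_one_div]
  ring

lemma cfId : ∀ n, θc * ((cfQ θ (n + 1) : ℝ) * cfAC θ θc n + cfQ θ n)
    = (cfP θ (n + 1) : ℝ) * cfAC θ θc n + cfP θ n := by
  intro n
  induction n with
  | zero => simp [cfP, cfQ, cfAC]
  | succ n ih =>
      have hx := cfAC_succ_ne_zero hne n
      rw [cfAC_rec hne n] at ih
      show θc * ((cfQ θ (n + 2) : ℝ) * cfAC θ θc (n + 1) + cfQ θ (n + 1))
        = (cfP θ (n + 2) : ℝ) * cfAC θ θc (n + 1) + cfP θ (n + 1)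
      rw [cfP, cfQ]
      push_cast
      field_simp at ih ⊢
      linear_combination ih

lemma cfB_rec (n : ℕ) : cfB θ θc (n + 1) * cfAC θ θc (n + 1) = - cfB θ θc n := by
  have h := cfId hne (n + 1)
  unfold cfB
  linear_combination -h

lemma cfB_ne_zero : ∀ n, cfB θ θc n ≠ 0 := by
  intro n
  induction n with
  | zero => simp [cfB, cfP, cfQ]
  | succ n ih =>
      intro hc
      apply ih
      have := cfB_rec hne n
      rw [hc, zero_mul] at this
      linarith [this]

end generic

lemma cfB_zero (θ θc : ℝ) : cfB θ θc 0 = 1 := by simp [cfB, cfP, cfQ]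

lemma cfDet (θ : ℝ) : ∀ n, cfP θ (n + 1) * cfQ θ n - cfP θ n * cfQ θ (n + 1) = (-1) ^ n := by
  intro n
  induction n with
  | zero => simp [cfP, cfQ]
  | succ n ih =>
      show cfP θ (n + 2) * cfQ θ (n + 1) - cfP θ (n + 1) * cfQ θ (n + 2) = (-1) ^ (n + 1)
      rw [cfP, cfQ, pow_succ]
      linear_combination (-1 : ℤ) * ih

section growth

variable {θ : ℝ} (hirr : Irrational θ) (h1 : 1 < θ)

include hirr h1

lemma cfQ_nonneg : ∀ n, 0 ≤ cfQ θ n := by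
  intro n
  induction n using Nat.twoStepInduction with
  | zero => simp [cfQ]
  | one => simp [cfQ]
  | more n ih ih1 =>
      rw [cfQ]
      have ha := cfA_one_le hirr h1 n
      nlinarith

lemma cfQ_one_le : ∀ n, 1 ≤ cfQ θ (n + 2) := by
  intro n
  induction n using Nat.twoStepInduction with
  | zero => simp [cfQ, cfP]
  | one =>
      show 1 ≤ cfQ θ 3
      have := cfA_one_le hirr h1 1
      show 1 ≤ cfA θ 1 * cfQ θ 2 + cfQ θ 1
      simp [cfQ]; omega
  | more n ih ih1 =>
      show 1 ≤ cfQ θ (n + 4)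
      show 1 ≤ cfA θ (n + 2) * cfQ θ (n + 3) + cfQ θ (n + 2)
      have ha := cfA_one_le hirr h1 (n + 2)
      have h2 := cfQ_nonneg hirr h1 (n + 2)
      nlinarith

lemma cfQ_ge : ∀ n : ℕ, (n : ℤ) ≤ cfQ θ (n + 3) := by
  intro n
  induction n with
  | zero =>
      have := cfQ_one_le hirr h1 1
      show (0:ℤ) ≤ cfQ θ (1 + 2)
      omega
  | succ n ih =>
      show ((n : ℤ) + 1) ≤ cfQ θ (n + 4)
      show ((n : ℤ) + 1) ≤ cfA θ (n + 2) * cfQ θ (n + 3) + cfQ θ (n + 2)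
      have ha := cfA_one_le hirr h1 (n + 2)
      have h2 := cfQ_one_le hirr h1 n
      have h3 : (0 : ℤ) ≤ cfQ θ (n + 3) := cfQ_nonneg hirr h1 (n + 3)
      nlinarith

lemma cfAC_self_ne (n : ℕ) : cfAC θ θ n ≠ (cfA θ n : ℝ) := by
  rw [cfAC_self]
  exact (cfAlpha_irrational hirr n).ne_int _

lemma cfB_self_abs_le_one : ∀ n, |cfB θ θ n| ≤ 1 := by
  intro n
  induction n with
  | zero => simp [cfB_zero]
  | succ n ih =>
      have hrec := cfB_rec (fun n => cfAC_self_ne hirr h1 n) n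
      have hα : 1 < cfAC θ θ (n + 1) := by
        rw [cfAC_self]; exact cfAlpha_gt_one hirr h1 (n + 1)
      have habs : |cfB θ θ (n + 1)| * cfAC θ θ (n + 1) = |cfB θ θ n| := by
        rw [← abs_of_pos (lt_trans one_pos hα), ← abs_mul, hrec, abs_neg]
      nlinarith [abs_nonneg (cfB θ θ (n + 1))]

end growth

lemma cf_unique {θ₁ θ₂ : ℝ} (h₁ : Irrational θ₁) (h₂ : Irrational θ₂)
    (g₁ : 1 < θ₁) (g₂ : 1 < θ₂) (hA : ∀ n, cfA θ₁ n = cfA θ₂ n) : θ₁ = θ₂ := by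
  have hPQ : ∀ n, cfP θ₁ n = cfP θ₂ n ∧ cfQ θ₁ n = cfQ θ₂ n := by
    intro n
    induction n using Nat.twoStepInduction with
    | zero => simp [cfP, cfQ]
    | one => simp [cfP, cfQ]
    | more n ih ih1 =>
        constructor
        · rw [cfP, cfP, hA, ih.1, ih1.1]
        · rw [cfQ, cfQ, hA, ih.2, ih1.2]
  have key : ∀ n : ℕ, |θ₁ - θ₂| * (cfQ θ₁ (n + 3) : ℝ) ≤ 2 := by
    intro n
    have e1 : cfB θ₁ θ₁ (n + 2) = (cfP θ₁ (n + 3) : ℝ) - (cfQ θ₁ (n + 3) : ℝ) * θ₁ := rfl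
    have e2 : cfB θ₂ θ₂ (n + 2) = (cfP θ₁ (n + 3) : ℝ) - (cfQ θ₁ (n + 3) : ℝ) * θ₂ := by
      rw [cfB, (hPQ (n + 3)).1, (hPQ (n + 3)).2]
    have hdiff : (cfQ θ₁ (n + 3) : ℝ) * (θ₁ - θ₂) = cfB θ₂ θ₂ (n + 2) - cfB θ₁ θ₁ (n + 2) := by
      rw [e1, e2]; ring
    have hb1 := cfB_self_abs_le_one h₁ g₁ (n + 2)
    have hb2 := cfB_self_abs_le_one h₂ g₂ (n + 2)
    calc |θ₁ - θ₂| * (cfQ θ₁ (n + 3) : ℝ)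
        = |(cfQ θ₁ (n + 3) : ℝ) * (θ₁ - θ₂)| := by
          have hq0 : (0:ℝ) ≤ (cfQ θ₁ (n + 3) : ℝ) := by exact_mod_cast cfQ_nonneg h₁ g₁ (n + 3)
          rw [abs_mul, abs_of_nonneg hq0]; ring
      _ = |cfB θ₂ θ₂ (n + 2) - cfB θ₁ θ₁ (n + 2)| := by rw [hdiff]
      _ ≤ |cfB θ₂ θ₂ (n + 2)| + |cfB θ₁ θ₁ (n + 2)| := abs_sub _ _
      _ ≤ 2 := by linarith
  by_contra hc
  have hd : 0 < |θ₁ - θ₂| := abs_pos.mpr (sub_ne_zero.mpr hc)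
  obtain ⟨n, hn⟩ := exists_nat_gt (2 / |θ₁ - θ₂|)
  have hQ : (n : ℝ) ≤ (cfQ θ₁ (n + 3) : ℝ) := by exact_mod_cast cfQ_ge h₁ g₁ n
  have h2n : 2 < |θ₁ - θ₂| * n := by
    rw [div_lt_iff₀ hd] at hn; linarith [hn]
  have := key n
  nlinarith

lemma int_coeffs_eq {θ : ℝ} (hirr : Irrational θ) (x y x' y' : ℤ)
    (h : (x : ℝ) + (y : ℝ) * θ = (x' : ℝ) + (y' : ℝ) * θ) : x = x' ∧ y = y' := by
  by_cases hy : y = y'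
  · subst hy
    have : (x : ℝ) = (x' : ℝ) := by linarith
    exact ⟨by exact_mod_cast this, rfl⟩
  · exfalso
    have hyy : ((y : ℝ) - (y' : ℝ)) ≠ 0 := by
      have : ((y - y' : ℤ) : ℝ) ≠ 0 := by exact_mod_cast sub_ne_zero.mpr hy
      push_cast at this; exact this
    apply hirr.ne_rat (((x' - x : ℤ) : ℚ) / ((y - y' : ℤ) : ℚ))
    push_cast
    rw [eq_div_iff hyy]
    linarith

lemma conv_core {θ : ℝ} {c p q P Q ε ε' : ℤ} {α α' : ℝ}
    (hirr : Irrational θ) (hθ1 : 1 < θ)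
    (hw2 : θ ^ 2 = θ + (c : ℝ))
    (hα : ((P : ℝ) - Q * θ) * α = -((p : ℝ) - q * θ))
    (hα' : ((P : ℝ) - Q * (1 - θ)) * α' = -((p : ℝ) - q * (1 - θ)))
    (hαpos : 1 < α) (hα'lo : -1 < α') (hα'hi : α' < 0)
    (hB'ne : (P : ℝ) - Q * (1 - θ) ≠ 0)
    (hdet : P * q - p * Q = ε')
    (hdet1 : ε' = 1 ∨ ε' = -1) (hε1 : ε = 1 ∨ ε = -1)
    (hunit : ((P : ℝ) - Q * θ) * ((P : ℝ) - Q * (1 - θ)) = (ε : ℝ)) :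
    ∃ U : ℤ, α = θ + (U : ℝ) := by
  have hee : (ε : ℝ) * ε = 1 := by rcases hε1 with h | h <;> rw [h] <;> norm_num
  have hmix : ((p : ℝ) - q * θ) * ((P : ℝ) - Q * (1 - θ))
      = ((p * (P - Q) - c * (q * Q) : ℤ) : ℝ) - (ε' : ℝ) * θ := by
    rw [← hdet]; push_cast
    linear_combination (-(q : ℝ) * Q) * hw2
  have h1 : α * (ε : ℝ) = -((p * (P - Q) - c * (q * Q) : ℤ) : ℝ) + (ε' : ℝ) * θ := by
    push_cast
    push_cast at hmix
    linear_combination (-α) * hunit + ((P : ℝ) - Q * (1 - θ)) * hα - hmix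
  have hαu : α = ((-ε * (p * (P - Q) - c * (q * Q)) : ℤ) : ℝ) + ((ε * ε' : ℤ) : ℝ) * θ := by
    push_cast
    push_cast at h1
    linear_combination (ε : ℝ) * h1 - α * hee
  have htr : ((-p : ℤ) : ℝ) + (q : ℝ) * θ =
      (((-ε * (p * (P - Q) - c * (q * Q))) * P - (ε * ε') * Q * c : ℤ) : ℝ)
      + (((ε * ε') * P - (-ε * (p * (P - Q) - c * (q * Q))) * Q - (ε * ε') * Q : ℤ) : ℝ) * θ := by
    push_cast
    push_cast at hαu
    linear_combination -hα + ((P : ℝ) - Q * θ) * hαu - (ε : ℝ) * (ε' : ℝ) * (Q : ℝ) * hw2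
  obtain ⟨e1, e2⟩ := int_coeffs_eq hirr _ _ _ _ htr
  have e1' := congrArg (fun z : ℤ => (z : ℝ)) e1
  have e2' := congrArg (fun z : ℤ => (z : ℝ)) e2
  push_cast at e1' e2'
  have hw2' : (1 - θ) ^ 2 = (1 - θ) + (c : ℝ) := by linear_combination hw2
  have htr' : (-(p : ℝ)) + (q : ℝ) * (1 - θ) =
      (((-ε * (p * (P - Q) - c * (q * Q)) : ℤ) : ℝ) + ((ε * ε' : ℤ) : ℝ) * (1 - θ))
        * ((P : ℝ) - Q * (1 - θ)) := by
    push_cast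
    linear_combination e1' + (1 - θ) * e2' + (ε : ℝ) * (ε' : ℝ) * (Q : ℝ) * hw2'
  have hα'u : α' = ((-ε * (p * (P - Q) - c * (q * Q)) : ℤ) : ℝ)
      + ((ε * ε' : ℤ) : ℝ) * (1 - θ) := by
    apply mul_right_cancel₀ hB'ne
    push_cast
    push_cast at htr'
    linear_combination hα' + htr'
  have hv4 : ε * ε' = 1 ∨ ε * ε' = -1 := by
    rcases hε1 with h | h <;> rcases hdet1 with h' | h' <;> simp [h, h']
  rcases hv4 with hvv | hvv
  · refine ⟨-ε * (p * (P - Q) - c * (q * Q)), ?_⟩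
    rw [hvv] at hαu; push_cast at hαu ⊢; linarith
  · exfalso
    rw [hvv] at hαu hα'u
    push_cast at hαu hα'u
    linarith

lemma one_div_window {x : ℝ} (h : x < -1) : -1 < 1 / x ∧ 1 / x < 0 := by
  have hx0 : x < 0 := by linarith
  constructor
  · rw [lt_div_iff_of_neg hx0]; linarith
  · exact div_neg_of_pos_of_neg one_pos hx0

/-- for a positive non-square integer `d ≡ 1 (mod 4)`, `ω_d = (1+√d)/2`, with
minimal period `l'` of the continued fraction of `ω_d` and convergents `p_n/q_n`:
for every `n ≥ 0`, `|p_n² - p_n q_n - q_n² (d-1)/4| = 1` iff `l' ∣ n + 1`. -/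
theorem stmt_7 (d : ℕ) (hd : 0 < d) (hns : ¬ IsSquare d) (hd4 : d % 4 = 1) (l' : ℕ)
    (hl : IsLeast {p : ℕ | 0 < p ∧ ∀ n, 1 ≤ n →
      cfA ((1 + Real.sqrt d) / 2) (n + p) = cfA ((1 + Real.sqrt d) / 2) n} l') (n : ℕ) :
    |cfP ((1 + Real.sqrt d) / 2) (n + 2) ^ 2
        - cfP ((1 + Real.sqrt d) / 2) (n + 2) * cfQ ((1 + Real.sqrt d) / 2) (n + 2)
        - cfQ ((1 + Real.sqrt d) / 2) (n + 2) ^ 2 * (((d : ℤ) - 1) / 4)| = 1 ↔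
      l' ∣ (n + 1) := by
  set θ : ℝ := (1 + Real.sqrt d) / 2 with hθdef
  -- basic facts about d and θ
  have hd1 : d ≠ 1 := fun h => hns (h ▸ IsSquare.one)
  have hd5 : 5 ≤ d := by omega
  have hsd : Irrational (Real.sqrt d) := irrational_sqrt_natCast_iff.mpr hns
  have hdR : (4 : ℝ) < (d : ℝ) := by exact_mod_cast (by omega : (4 : ℕ) < d)
  have hsd2 : 2 < Real.sqrt d := (Real.lt_sqrt (by norm_num)).mpr (by nlinarith)
  have hθ1 : 1 < θ := by rw [hθdef]; linarith
  have hirr : Irrational θ := by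
    have h2 : Irrational ((1 : ℤ) + Real.sqrt d) := hsd.intCast_add 1
    have h3 := h2.div_intCast (m := 2) (by norm_num)
    rw [hθdef]
    convert h3 using 2 <;> push_cast <;> ring
  set c : ℤ := ((d : ℤ) - 1) / 4 with hcdef
  have hc4 : (d : ℤ) = 4 * c + 1 := by omega
  have hcR : 4 * (c : ℝ) = (d : ℝ) - 1 := by exact_mod_cast (by omega : (4 * c : ℤ) = (d : ℤ) - 1)
  have hsq : Real.sqrt d ^ 2 = (d : ℝ) := Real.sq_sqrt (by positivity)
  have hw2 : θ ^ 2 = θ + (c : ℝ) := by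
    rw [hθdef]; linear_combination hsq / 4 - hcR / 4
  have hw2' : (1 - θ) ^ 2 = (1 - θ) + (c : ℝ) := by linear_combination hw2
  -- partial quotients are positive
  have hA1 : ∀ m, 1 ≤ cfA θ m := cfA_one_le hirr hθ1
  have hneS : ∀ m, cfAC θ θ m ≠ (cfA θ m : ℝ) := fun m => cfAC_self_ne hirr hθ1 m
  -- conjugate track stays in (-1, 0)
  have hrange : ∀ m, -1 < cfAC θ (1 - θ) (m + 1) ∧ cfAC θ (1 - θ) (m + 1) < 0 := by
    intro m
    induction m with
    | zero =>
        have h1 : (1 : ℝ) ≤ (cfA θ 0 : ℝ) := by exact_mod_cast hA1 0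
        have : cfAC θ (1 - θ) 0 - (cfA θ 0 : ℝ) < -1 := by
          show (1 - θ) - (cfA θ 0 : ℝ) < -1
          linarith
        exact one_div_window this
    | succ m ih =>
        have h1 : (1 : ℝ) ≤ (cfA θ (m + 1) : ℝ) := by exact_mod_cast hA1 (m + 1)
        have : cfAC θ (1 - θ) (m + 1) - (cfA θ (m + 1) : ℝ) < -1 := by linarith [ih.2]
        exact one_div_window this
  have hneC : ∀ m, cfAC θ (1 - θ) m ≠ (cfA θ m : ℝ) := by
    intro m
    have h1 : (1 : ℝ) ≤ (cfA θ m : ℝ) := by exact_mod_cast hA1 m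
    cases m with
    | zero =>
        apply ne_of_lt
        show (1 - θ) < (cfA θ 0 : ℝ)
        linarith
    | succ m => exact ne_of_lt (by linarith [(hrange m).2])
  have hBrec : ∀ m, cfB θ θ (m + 1) * cfAC θ θ (m + 1) = - cfB θ θ m := cfB_rec hneS
  have hBrec' : ∀ m, cfB θ (1 - θ) (m + 1) * cfAC θ (1 - θ) (m + 1) = - cfB θ (1 - θ) m :=
    cfB_rec hneC
  have hBne' : ∀ m, cfB θ (1 - θ) m ≠ 0 := cfB_ne_zero hneC
  -- the norm sequence
  set E : ℕ → ℤ := fun m =>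
    cfP θ (m + 1) ^ 2 - cfP θ (m + 1) * cfQ θ (m + 1) - c * cfQ θ (m + 1) ^ 2 with hEdef
  have heE : ∀ m, cfB θ θ m * cfB θ (1 - θ) m = (E m : ℝ) := by
    intro m
    simp only [hEdef]
    unfold cfB
    push_cast
    linear_combination (-(cfQ θ (m + 1) : ℝ) ^ 2) * hw2
  have hg_ne : ∀ m, cfAC θ θ (m + 1) * cfAC θ (1 - θ) (m + 1) ≠ 0 := by
    intro m
    apply mul_ne_zero
    · rw [cfAC_self]
      exact ne_of_gt (lt_trans one_pos (cfAlpha_gt_one hirr hθ1 (m + 1)))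
    · exact ne_of_lt (hrange m).2
  have herec : ∀ m, (cfB θ θ (m + 1) * cfB θ (1 - θ) (m + 1))
      * (cfAC θ θ (m + 1) * cfAC θ (1 - θ) (m + 1)) = cfB θ θ m * cfB θ (1 - θ) m := by
    intro m
    linear_combination (cfB θ (1 - θ) (m + 1) * cfAC θ (1 - θ) (m + 1)) * hBrec m
      - cfB θ θ m * hBrec' m
  -- periodicity of the total quotients
  have hper1 : cfAlpha θ (l' + 1) = cfAlpha θ 1 := by
    apply cf_unique (cfAlpha_irrational hirr _) (cfAlpha_irrational hirr _)
      (cfAlpha_gt_one hirr hθ1 _) (cfAlpha_gt_one hirr hθ1 _)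
    intro j
    rw [← cfA_shift θ (l' + 1) j, ← cfA_shift θ 1 j]
    have e1 : j + (l' + 1) = (j + 1) + l' := by omega
    rw [e1, hl.1.2 (j + 1) (by omega)]
  have hαper : ∀ s, cfAlpha θ (s + 1 + l') = cfAlpha θ (s + 1) := by
    intro s
    have e1 : s + 1 + l' = s + (l' + 1) := by omega
    rw [e1, cfAlpha_shift θ (l' + 1) s, hper1, ← cfAlpha_shift θ 1 s]
  -- conjugation transport for products of the B sequence
  have hBmul : ∀ a b : ℕ, cfB θ θ a * cfB θ θ b =
      ((cfP θ (a + 1) * cfP θ (b + 1) + c * (cfQ θ (a + 1) * cfQ θ (b + 1)) : ℤ) : ℝ)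
      + ((cfQ θ (a + 1) * cfQ θ (b + 1) - cfP θ (a + 1) * cfQ θ (b + 1)
          - cfP θ (b + 1) * cfQ θ (a + 1) : ℤ) : ℝ) * θ := by
    intro a b
    unfold cfB
    push_cast
    linear_combination ((cfQ θ (a + 1) : ℝ) * (cfQ θ (b + 1) : ℝ)) * hw2
  have hBmul' : ∀ a b : ℕ, cfB θ (1 - θ) a * cfB θ (1 - θ) b =
      ((cfP θ (a + 1) * cfP θ (b + 1) + c * (cfQ θ (a + 1) * cfQ θ (b + 1)) : ℤ) : ℝ)
      + ((cfQ θ (a + 1) * cfQ θ (b + 1) - cfP θ (a + 1) * cfQ θ (b + 1)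
          - cfP θ (b + 1) * cfQ θ (a + 1) : ℤ) : ℝ) * (1 - θ) := by
    intro a b
    unfold cfB
    push_cast
    linear_combination ((cfQ θ (a + 1) : ℝ) * (cfQ θ (b + 1) : ℝ)) * hw2'
  have hBtrans : ∀ a b e f : ℕ, cfB θ θ a * cfB θ θ b = cfB θ θ e * cfB θ θ f →
      cfB θ (1 - θ) a * cfB θ (1 - θ) b = cfB θ (1 - θ) e * cfB θ (1 - θ) f := by
    intro a b e f h
    rw [hBmul a b, hBmul e f] at h
    rw [hBmul' a b, hBmul' e f]
    have h2 : (1 : ℝ) - θ = 1 - θ := rfl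
    obtain ⟨ex, ey⟩ := int_coeffs_eq hirr _ _ _ _ h
    rw [ex, ey]
  have hα'per : ∀ s, cfAC θ (1 - θ) (s + 1 + l') = cfAC θ (1 - θ) (s + 1) := by
    intro s
    have h1' := hBrec (s + l')
    have e1 : s + l' + 1 = s + 1 + l' := by omega
    rw [e1] at h1'
    have hax : cfAC θ θ (s + 1 + l') = cfAC θ θ (s + 1) := by
      rw [cfAC_self, cfAC_self, hαper s]
    rw [hax] at h1'
    have h2' := hBrec s
    have hcross : cfB θ θ s * cfB θ θ (s + 1 + l') = cfB θ θ (s + l') * cfB θ θ (s + 1) := by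
      linear_combination cfB θ θ (s + 1 + l') * h2' - cfB θ θ (s + 1) * h1'
    have hcross' := hBtrans _ _ _ _ hcross
    have k1 := hBrec' (s + l')
    rw [e1] at k1
    have k2 := hBrec' s
    have hprod_ne : cfB θ (1 - θ) (s + 1 + l') * cfB θ (1 - θ) (s + 1) ≠ 0 :=
      mul_ne_zero (hBne' _) (hBne' _)
    apply mul_right_cancel₀ hprod_ne
    linear_combination cfB θ (1 - θ) (s + 1) * k1 - cfB θ (1 - θ) (s + 1 + l') * k2 + hcross'
  -- multiplicative periodicity of the norms
  have heper : ∀ m, cfB θ θ (m + l') * cfB θ (1 - θ) (m + l')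
      = (cfB θ θ l' * cfB θ (1 - θ) l') * (cfB θ θ m * cfB θ (1 - θ) m) := by
    intro m
    induction m with
    | zero => simp [cfB_zero]
    | succ m ih =>
        have e1 : m + 1 + l' = (m + l') + 1 := by omega
        have hgper : cfAC θ θ (m + 1 + l') * cfAC θ (1 - θ) (m + 1 + l')
            = cfAC θ θ (m + 1) * cfAC θ (1 - θ) (m + 1) := by
          rw [cfAC_self, cfAC_self, hαper m, hα'per m]
        have h1 := herec (m + l')
        rw [← e1] at h1
        have h2 := herec m
        apply mul_right_cancel₀ (hg_ne m)
        calc (cfB θ θ (m + 1 + l') * cfB θ (1 - θ) (m + 1 + l'))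
              * (cfAC θ θ (m + 1) * cfAC θ (1 - θ) (m + 1))
            = (cfB θ θ (m + 1 + l') * cfB θ (1 - θ) (m + 1 + l'))
              * (cfAC θ θ (m + 1 + l') * cfAC θ (1 - θ) (m + 1 + l')) := by rw [hgper]
          _ = cfB θ θ (m + l') * cfB θ (1 - θ) (m + l') := h1
          _ = (cfB θ θ l' * cfB θ (1 - θ) l') * (cfB θ θ m * cfB θ (1 - θ) m) := ih
          _ = (cfB θ θ l' * cfB θ (1 - θ) l')
              * ((cfB θ θ (m + 1) * cfB θ (1 - θ) (m + 1))
                * (cfAC θ θ (m + 1) * cfAC θ (1 - θ) (m + 1))) := by rw [h2]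
          _ = ((cfB θ θ l' * cfB θ (1 - θ) l')
              * (cfB θ θ (m + 1) * cfB θ (1 - θ) (m + 1)))
              * (cfAC θ θ (m + 1) * cfAC θ (1 - θ) (m + 1)) := by ring
  -- the norm over one period is ±1
  have hfr : Int.fract θ ≠ 0 := by
    have hfi : Irrational (Int.fract θ) := by
      rw [← Int.self_sub_floor]; exact hirr.sub_intCast _
    intro h
    exact hfi.ne_int 0 (by exact_mod_cast h)
  have hinvα1 : 1 / cfAlpha θ 1 = θ - (cfA θ 0 : ℝ) := by
    rw [cfAlpha_succ, cfAlpha_zero, one_div_one_div, cfA, cfAlpha_zero, Int.self_sub_floor]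
  have hαl : cfAlpha θ l' = θ + ((cfA θ l' - cfA θ 0 : ℤ) : ℝ) := by
    have h := cfAC_rec hneS l'
    rw [cfAC_self, cfAC_self] at h
    rw [h, hper1, hinvα1]
    push_cast
    ring
  have hIdl := cfId hneS l'
  rw [cfAC_self, hαl] at hIdl
  have hlin : (((cfA θ l' - cfA θ 0 + 1) * cfQ θ (l' + 1) + cfQ θ l' - cfP θ (l' + 1) : ℤ)
        : ℝ) * θ
      = (((cfA θ l' - cfA θ 0) * cfP θ (l' + 1) + cfP θ l' - c * cfQ θ (l' + 1) : ℤ) : ℝ) := by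
    push_cast
    push_cast at hIdl
    linear_combination hIdl - (cfQ θ (l' + 1) : ℝ) * hw2
  have hzz := int_coeffs_eq hirr 0 _ _ 0
    (by rw [Int.cast_zero]; linarith [hlin] :
      ((0 : ℤ) : ℝ) + (((cfA θ l' - cfA θ 0 + 1) * cfQ θ (l' + 1) + cfQ θ l'
        - cfP θ (l' + 1) : ℤ) : ℝ) * θ
      = (((cfA θ l' - cfA θ 0) * cfP θ (l' + 1) + cfP θ l' - c * cfQ θ (l' + 1) : ℤ) : ℝ)
        + ((0 : ℤ) : ℝ) * θ)
  have hi : (cfA θ l' - cfA θ 0 + 1) * cfQ θ (l' + 1) + cfQ θ l' - cfP θ (l' + 1) = 0 :=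
    hzz.2
  have hii : (cfA θ l' - cfA θ 0) * cfP θ (l' + 1) + cfP θ l' - c * cfQ θ (l' + 1) = 0 :=
    hzz.1.symm
  have hdetl := cfDet θ l'
  have hEl : E l' = (-1) ^ l' := by
    simp only [hEdef]
    linear_combination hdetl - cfP θ (l' + 1) * hi + cfQ θ (l' + 1) * hii
  -- integer periodicity
  have hEper : ∀ m, E (m + l') = (-1) ^ l' * E m := by
    intro m
    have hr : (E (m + l') : ℝ) = ((E l' : ℤ) : ℝ) * ((E m : ℤ) : ℝ) := by
      rw [← heE, ← heE, ← heE]; exact heper m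
    have hz : E (m + l') = E l' * E m := by exact_mod_cast hr
    rw [hz, hEl]
  have hE0 : E 0 = 1 := by simp [hEdef, cfP, cfQ]
  have habs_pow : ∀ k, |E (l' * k)| = 1 := by
    intro k
    induction k with
    | zero => simp [hE0]
    | succ k ih =>
        have e1 : l' * (k + 1) = l' * k + l' := by ring
        rw [e1, hEper (l' * k), abs_mul, abs_pow, abs_neg, abs_one, one_pow, one_mul, ih]
  have hEdecomp : ∀ k r, E (r + l' * k) = ((-1) ^ l') ^ k * E r := by
    intro k
    induction k with
    | zero => intro r; simp
    | succ k ih =>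
        intro r
        have e1 : r + l' * (k + 1) = (r + l' * k) + l' := by ring
        rw [e1, hEper, ih, pow_succ]
        ring
  have hl'pos : 0 < l' := hl.1.1
  -- the converse: a unit forces a period
  have hconv : ∀ s : ℕ, |E (s + 1)| = 1 → l' ≤ s + 1 := by
    intro s hEr
    have hε1 : E (s + 1) = 1 ∨ E (s + 1) = -1 := by
      rcases (abs_eq (by norm_num : (0:ℤ) ≤ 1)).mp hEr with h | h
      · exact Or.inl h
      · exact Or.inr h
    have hdet := cfDet θ (s + 1)
    have hdet1 : ((-1 : ℤ)) ^ (s + 1) = 1 ∨ ((-1 : ℤ)) ^ (s + 1) = -1 := by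
      rcases Nat.even_or_odd (s + 1) with h | h
      · exact Or.inl (Even.neg_one_pow h)
      · exact Or.inr (Odd.neg_one_pow h)
    have hα : ((cfP θ (s + 2) : ℝ) - cfQ θ (s + 2) * θ) * cfAC θ θ (s + 1)
        = -((cfP θ (s + 1) : ℝ) - cfQ θ (s + 1) * θ) := hBrec s
    have hα' : ((cfP θ (s + 2) : ℝ) - cfQ θ (s + 2) * (1 - θ)) * cfAC θ (1 - θ) (s + 1)
        = -((cfP θ (s + 1) : ℝ) - cfQ θ (s + 1) * (1 - θ)) := hBrec' s
    have hαpos : 1 < cfAC θ θ (s + 1) := by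
      rw [cfAC_self]; exact cfAlpha_gt_one hirr hθ1 (s + 1)
    have hB'ne2 : (cfP θ (s + 2) : ℝ) - cfQ θ (s + 2) * (1 - θ) ≠ 0 := hBne' (s + 1)
    have hunit : ((cfP θ (s + 2) : ℝ) - cfQ θ (s + 2) * θ)
        * ((cfP θ (s + 2) : ℝ) - cfQ θ (s + 2) * (1 - θ)) = ((E (s + 1) : ℤ) : ℝ) :=
      heE (s + 1)
    obtain ⟨U, hU⟩ := conv_core hirr hθ1 hw2 hα hα' hαpos (hrange s).1 (hrange s).2
      hB'ne2 hdet hdet1 hε1 hunit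
    have hαreal : cfAlpha θ (s + 1) = θ + (U : ℝ) := by rw [← cfAC_self]; exact hU
    have hnext : cfAlpha θ (s + 1 + 1) = cfAlpha θ 1 := by
      rw [cfAlpha_succ θ (s + 1), hαreal, Int.fract_add_intCast, cfAlpha_succ θ 0, cfAlpha_zero]
    have hmem : (s + 1) ∈ {p : ℕ | 0 < p ∧ ∀ m, 1 ≤ m → cfA θ (m + p) = cfA θ m} := by
      refine ⟨Nat.succ_pos s, ?_⟩
      intro m hm
      obtain ⟨j, rfl⟩ : ∃ j, m = j + 1 := ⟨m - 1, by omega⟩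
      have e1 : j + 1 + (s + 1) = j + (s + 1 + 1) := by omega
      rw [e1, cfA_shift θ (s + 1 + 1) j, hnext, ← cfA_shift θ 1 j]
    exact hl.2 hmem
  -- final assembly
  have hexpr : cfP θ (n + 2) ^ 2 - cfP θ (n + 2) * cfQ θ (n + 2)
      - cfQ θ (n + 2) ^ 2 * c = E (n + 1) := by
    simp only [hEdef]; ring
  rw [hexpr]
  constructor
  · intro habs
    have hmod : (n + 1) % l' = 0 := by
      by_contra hr
      have hrlt : (n + 1) % l' < l' := Nat.mod_lt _ hl'pos
      have hdec : E (n + 1) = ((-1) ^ l') ^ ((n + 1) / l') * E ((n + 1) % l') := by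
        rw [← hEdecomp]
        congr 1
        exact (Nat.mod_add_div (n + 1) l').symm
      rw [hdec, abs_mul, abs_pow, abs_pow, abs_neg, abs_one, one_pow, one_pow, one_mul]
        at habs
      obtain ⟨s, hs⟩ : ∃ s, (n + 1) % l' = s + 1 := ⟨(n + 1) % l' - 1, by omega⟩
      rw [hs] at habs
      have := hconv s habs
      omega
    exact Nat.dvd_of_mod_eq_zero hmod
  · intro hdvd
    obtain ⟨k, hk⟩ := hdvd
    rw [hk]
    exact habs_pow k
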